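/- Let β, b ∈ ℕ^m and A ∈ ℕ^{m×n} with columns A_1,…,A_n satisfy b ≤ β, A_k ≤ β and A_k ≠ 0 for all 1 ≤ k ≤ n; assume there exists x ∈ ℕ^n with Ax = b, and let c ∈ ℝ^n. For 1 ≤ ℓ ≤ |β| := Σ_j β_j define J_ℓ := inf { c'(E𝐲) : 𝐲 ∈ ℝ^p, 𝐲 ≥ 0, and for every z ∈ ℕ^m with z ≤ β and 1 ≤ |z| ≤ ℓ, b^z = Σ_{k,u} y[k,u]·((u+A_k)^z − u^z) }, and define J_• := min { c'x : x ∈ ℕ^n, Ax = b }. Then J_1 ≤ J_2 ≤ … ≤ J_{|β|} and J_{|β|} = J_•. -/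

import Mathlib

open Polynomial in
lemma lag1 (B : ℕ) (t : Fin (B+1)) : ∃ a : Fin (B+1) → ℝ,
    ∀ v : Fin (B+1), ∑ s, a s * ((v : ℕ) : ℝ)^(s : ℕ) = if v = t then 1 else 0 := by
  classical
  set q : ℝ[X] := ∏ s ∈ Finset.univ.erase t,
      (Polynomial.C (((t:ℕ):ℝ) - ((s:ℕ):ℝ))⁻¹ * (Polynomial.X - Polynomial.C ((s:ℕ):ℝ))) with hq
  have hdeg : q.natDegree < B + 1 := by
    have h1 : q.natDegree ≤ ∑ s ∈ Finset.univ.erase t,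
        (Polynomial.C (((t:ℕ):ℝ) - ((s:ℕ):ℝ))⁻¹ * (Polynomial.X - Polynomial.C ((s:ℕ):ℝ))).natDegree :=
      Polynomial.natDegree_prod_le _ _
    have h2 : ∀ s ∈ Finset.univ.erase t,
        (Polynomial.C (((t:ℕ):ℝ) - ((s:ℕ):ℝ))⁻¹ * (Polynomial.X - Polynomial.C ((s:ℕ):ℝ))).natDegree ≤ 1 := by
      intro s _
      calc _ ≤ (Polynomial.C (((t:ℕ):ℝ) - ((s:ℕ):ℝ))⁻¹).natDegree
            + (Polynomial.X - Polynomial.C ((s:ℕ):ℝ)).natDegree := Polynomial.natDegree_mul_le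
        _ = 1 := by rw [Polynomial.natDegree_C, Polynomial.natDegree_X_sub_C]
    have h3 : ∑ s ∈ Finset.univ.erase t, (1:ℕ) = B := by
      simp [Finset.card_erase_of_mem]
    calc q.natDegree ≤ _ := h1
      _ ≤ ∑ s ∈ Finset.univ.erase t, 1 := Finset.sum_le_sum h2
      _ = B := h3
      _ < B + 1 := Nat.lt_succ_self B
  have hinj : ∀ s : Fin (B+1), ∀ s' : Fin (B+1), s ≠ s' → ((s:ℕ):ℝ) ≠ ((s':ℕ):ℝ) := by
    intro s s' h
    simp only [ne_eq, Nat.cast_inj]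
    exact fun hh => h (Fin.ext hh)
  refine ⟨fun s => q.coeff s, fun v => ?_⟩
  have heval : ∑ s : Fin (B+1), q.coeff s * ((v:ℕ):ℝ)^(s:ℕ) = q.eval ((v:ℕ):ℝ) := by
    rw [Polynomial.eval_eq_sum_range' hdeg]
    rw [Fin.sum_univ_eq_sum_range (fun i => q.coeff i * ((v:ℕ):ℝ)^i)]
  rw [heval, hq]
  simp only [Polynomial.eval_prod, Polynomial.eval_mul, Polynomial.eval_C, Polynomial.eval_sub,
    Polynomial.eval_X]
  by_cases hv : v = t
  · subst hv
    rw [if_pos rfl]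
    apply Finset.prod_eq_one
    intro s hs
    have hne : ((v:ℕ):ℝ) - ((s:ℕ):ℝ) ≠ 0 :=
      sub_ne_zero.mpr (hinj v s (Ne.symm (Finset.ne_of_mem_erase hs)))
    field_simp
  · rw [if_neg hv]
    apply Finset.prod_eq_zero (Finset.mem_erase.mpr ⟨hv, Finset.mem_univ v⟩)
    simp

lemma spanBox (m : ℕ) (β : Fin m → ℕ) (G : (∀ j, Fin (β j + 1)) → ℝ) :
    ∃ Co : (∀ j, Fin (β j + 1)) → ℝ,
      ∀ v, G v = ∑ z, Co z * ∏ j, ((v j : ℕ) : ℝ) ^ (z j : ℕ) := by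
  classical
  -- indicator functions
  have hind : ∀ w : (∀ j, Fin (β j + 1)), ∃ c : (∀ j, Fin (β j + 1)) → ℝ,
      ∀ v, (if v = w then (1:ℝ) else 0) = ∑ z, c z * ∏ j, ((v j : ℕ) : ℝ) ^ (z j : ℕ) := by
    intro w
    choose a ha using fun j => lag1 (β j) (w j)
    refine ⟨fun z => ∏ j, a j (z j), fun v => ?_⟩
    have : ∑ z : (∀ j, Fin (β j + 1)), ∏ j, (a j (z j) * ((v j : ℕ) : ℝ) ^ (z j : ℕ))
        = ∏ j, ∑ s : Fin (β j + 1), a j s * ((v j : ℕ) : ℝ) ^ (s : ℕ) := by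
      rw [Finset.prod_univ_sum]; rw [Fintype.piFinset_univ]
    rw [show (∑ z : (∀ j, Fin (β j + 1)), (∏ j, a j (z j)) * ∏ j, ((v j : ℕ) : ℝ) ^ (z j : ℕ))
        = ∑ z : (∀ j, Fin (β j + 1)), ∏ j, (a j (z j) * ((v j : ℕ) : ℝ) ^ (z j : ℕ)) by
      refine Finset.sum_congr rfl fun z _ => ?_; rw [Finset.prod_mul_distrib]]
    rw [this]
    simp only [ha]
    by_cases hv : v = w
    · subst hv; simp
    · rw [if_neg hv]
      obtain ⟨j0, hj0⟩ : ∃ j0, v j0 ≠ w j0 := by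
        by_contra h; push_neg at h; exact hv (funext h)
      rw [eq_comm]
      exact Finset.prod_eq_zero (Finset.mem_univ j0) (by rw [if_neg hj0])
  choose c hc using hind
  refine ⟨fun z => ∑ w, G w * c w z, fun v => ?_⟩
  rw [show (∑ z : (∀ j, Fin (β j + 1)), (∑ w, G w * c w z) * ∏ j, ((v j : ℕ) : ℝ) ^ (z j : ℕ))
      = ∑ w, G w * ∑ z, c w z * ∏ j, ((v j : ℕ) : ℝ) ^ (z j : ℕ) by
    simp only [Finset.sum_mul, Finset.mul_sum]
    rw [Finset.sum_comm]
    exact Finset.sum_congr rfl fun w _ => Finset.sum_congr rfl fun z _ => by ring]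
  simp only [← hc]
  simp


lemma pathCons (m n : ℕ) (A : Matrix (Fin m) (Fin n) ℕ) (β : Fin m → ℕ) :
    ∀ (N : ℕ) (x : Fin n → ℕ) (b' : Fin m → ℕ), (∑ k, x k = N) →
    (∀ j, ∑ k, A j k * x k = b' j) → (∀ j, b' j ≤ β j) →
    ∃ y : (Σ k : Fin n, ∀ j : Fin m, Fin (β j - A j k + 1)) → ℝ,
      (∀ c, 0 ≤ y c) ∧
      (∀ z : ∀ j : Fin m, Fin (β j + 1), 1 ≤ ∑ j, (z j : ℕ) →
        (∏ j, ((b' j : ℝ)) ^ (z j : ℕ)) =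
          ∑ c : Σ k : Fin n, ∀ j : Fin m, Fin (β j - A j k + 1), y c *
            ((∏ j, (((c.2 j : ℕ) + A j c.1 : ℕ) : ℝ) ^ (z j : ℕ)) -
              ∏ j, ((c.2 j : ℕ) : ℝ) ^ (z j : ℕ))) ∧
      (∀ k, ∑ u : ∀ j' : Fin m, Fin (β j' - A j' k + 1), y ⟨k, u⟩ = (x k : ℝ)) := by
  classical
  intro N
  induction N with
  | zero =>
    intro x b' hsum hAx hble
    have hx : ∀ k, x k = 0 := fun k =>
      (Finset.sum_eq_zero_iff.mp hsum) k (Finset.mem_univ k)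
    have hb0 : ∀ j, b' j = 0 := by
      intro j; rw [← hAx j]
      exact Finset.sum_eq_zero fun k _ => by rw [hx k, mul_zero]
    refine ⟨0, fun c => le_refl 0, fun z hz => ?_, fun k => by simp [hx k]⟩
    obtain ⟨j0, hj0⟩ : ∃ j0, 1 ≤ (z j0 : ℕ) := by
      by_contra h; push_neg at h
      have h0 : ∑ j, (z j : ℕ) = 0 := Finset.sum_eq_zero fun j _ => by have := h j; omega
      omega
    rw [Finset.prod_eq_zero (Finset.mem_univ j0)
      (by rw [hb0 j0]; simp only [Nat.cast_zero]; exact zero_pow (by omega))]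
    simp
  | succ N ih =>
    intro x b' hsum hAx hble
    obtain ⟨k0, hk0⟩ : ∃ k0, x k0 ≠ 0 := by
      by_contra h; push_neg at h
      rw [Finset.sum_eq_zero (fun k _ => h k)] at hsum; omega
    have hx1 : 1 ≤ x k0 := Nat.one_le_iff_ne_zero.mpr hk0
    set x' : Fin n → ℕ := Function.update x k0 (x k0 - 1) with hx'
    set b'' : Fin m → ℕ := fun j => ∑ k, A j k * x' k with hb''
    have hx'k0 : x' k0 = x k0 - 1 := Function.update_self _ _ _
    have hx'ne : ∀ k, k ≠ k0 → x' k = x k := fun k hk => Function.update_of_ne hk _ _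
    have hsum' : ∑ k, x' k = N := by
      have e1 : x' k0 + ∑ k ∈ Finset.univ.erase k0, x' k = ∑ k, x' k :=
        Finset.add_sum_erase _ _ (Finset.mem_univ k0)
      have e2 : x k0 + ∑ k ∈ Finset.univ.erase k0, x k = ∑ k, x k :=
        Finset.add_sum_erase _ _ (Finset.mem_univ k0)
      have e3 : ∑ k ∈ Finset.univ.erase k0, x' k = ∑ k ∈ Finset.univ.erase k0, x k :=
        Finset.sum_congr rfl fun k hk => hx'ne k (Finset.ne_of_mem_erase hk)
      omega
    have hkey : ∀ j, b'' j + A j k0 = b' j := by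
      intro j
      have e2 : A j k0 * x k0 + ∑ k ∈ Finset.univ.erase k0, A j k * x k = b' j := by
        rw [Finset.add_sum_erase _ (fun k => A j k * x k) (Finset.mem_univ k0)]; exact hAx j
      have e1 : b'' j = A j k0 * x' k0 + ∑ k ∈ Finset.univ.erase k0, A j k * x' k :=
        (Finset.add_sum_erase _ _ (Finset.mem_univ k0)).symm
      have e3 : ∑ k ∈ Finset.univ.erase k0, A j k * x' k
          = ∑ k ∈ Finset.univ.erase k0, A j k * x k :=
        Finset.sum_congr rfl fun k hk => by rw [hx'ne k (Finset.ne_of_mem_erase hk)]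
      have e4 : A j k0 * x' k0 + A j k0 = A j k0 * x k0 := by
        rw [hx'k0, ← Nat.mul_succ]; congr 1; omega
      calc b'' j + A j k0
          = (A j k0 * x' k0 + A j k0) + ∑ k ∈ Finset.univ.erase k0, A j k * x k := by
            rw [e1, e3]; ring
        _ = b' j := by rw [e4]; exact e2
    have hble'' : ∀ j, b'' j ≤ β j := fun j => by have := hkey j; have := hble j; omega
    obtain ⟨y', hy'nn, hy'con, hy'marg⟩ := ih x' b'' hsum' (fun j => rfl) hble''
    have hu0le : ∀ j, b'' j ≤ β j - A j k0 := fun j => by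
      have := hkey j; have := hble j; omega
    set u0 : ∀ j : Fin m, Fin (β j - A j k0 + 1) :=
      fun j => ⟨b'' j, by have := hu0le j; omega⟩ with hu0
    set c0 : Σ k : Fin n, ∀ j : Fin m, Fin (β j - A j k + 1) := ⟨k0, u0⟩ with hc0
    refine ⟨fun c => y' c + if c = c0 then 1 else 0, fun c => add_nonneg (hy'nn c) (by split <;> norm_num), ?_, ?_⟩
    · intro z hz
      have hsplit : ∀ D : (Σ k : Fin n, ∀ j : Fin m, Fin (β j - A j k + 1)) → ℝ,
          ∑ c, (y' c + if c = c0 then 1 else 0) * D c = (∑ c, y' c * D c) + D c0 := by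
        intro D
        rw [show (fun c => (y' c + if c = c0 then (1:ℝ) else 0) * D c)
            = fun c => y' c * D c + (if c = c0 then D c else 0) by
          funext c; by_cases h : c = c0
          · subst h; simp; ring
          · simp [h]]
        rw [Finset.sum_add_distrib, Finset.sum_ite_eq' Finset.univ c0 D]
        simp
      rw [hsplit]
      rw [← hy'con z hz]
      have hhead : (∏ j, (((c0.2 j : ℕ) + A j c0.1 : ℕ) : ℝ) ^ (z j : ℕ))
          = ∏ j, ((b' j : ℝ)) ^ (z j : ℕ) := by
        refine Finset.prod_congr rfl fun j _ => ?_
        have : (c0.2 j : ℕ) + A j c0.1 = b' j := hkey j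
        rw [this]
      have htail : (∏ j, ((c0.2 j : ℕ) : ℝ) ^ (z j : ℕ))
          = ∏ j, ((b'' j : ℝ)) ^ (z j : ℕ) := rfl
      rw [hhead, htail]
      ring
    · intro k
      by_cases hk : k = k0
      · subst hk
        have hmargsplit : ∑ u : ∀ j' : Fin m, Fin (β j' - A j' k + 1),
            (y' ⟨k, u⟩ + if (⟨k, u⟩ : Σ k : Fin n, ∀ j : Fin m, Fin (β j - A j k + 1)) = c0 then (1:ℝ) else 0)
            = (∑ u : ∀ j' : Fin m, Fin (β j' - A j' k + 1), y' ⟨k, u⟩) + 1 := by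
          rw [Finset.sum_add_distrib]
          congr 1
          rw [show (fun u : ∀ j' : Fin m, Fin (β j' - A j' k + 1) =>
              if (⟨k, u⟩ : Σ k : Fin n, ∀ j : Fin m, Fin (β j - A j k + 1)) = c0 then (1:ℝ) else 0)
              = fun u => if u = u0 then (1:ℝ) else 0 by
            funext u; simp [hc0]]
          simp
        rw [hmargsplit, hy'marg k, hx'k0]
        have : ((x k - 1 : ℕ) : ℝ) = (x k : ℝ) - 1 := by
          push_cast [Nat.cast_sub hx1]; ring
        rw [this]; ring
      · have hmargsplit : ∑ u : ∀ j' : Fin m, Fin (β j' - A j' k + 1),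
            (y' ⟨k, u⟩ + if (⟨k, u⟩ : Σ k : Fin n, ∀ j : Fin m, Fin (β j - A j k + 1)) = c0 then (1:ℝ) else 0)
            = ∑ u : ∀ j' : Fin m, Fin (β j' - A j' k + 1), y' ⟨k, u⟩ := by
          refine Finset.sum_congr rfl fun u _ => ?_
          rw [if_neg (by simp [hc0, hk]), add_zero]
        rw [hmargsplit, hy'marg k, hx'ne k hk]

lemma mainIdentity (m n : ℕ) (A : Matrix (Fin m) (Fin n) ℕ) (β b : Fin m → ℕ)
    (hb : ∀ j, b j ≤ β j) (hA : ∀ k j, A j k ≤ β j)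
    (y : (Σ k : Fin n, ∀ j : Fin m, Fin (β j - A j k + 1)) → ℝ)
    (hcon : ∀ z : ∀ j : Fin m, Fin (β j + 1), 1 ≤ ∑ j, (z j : ℕ) →
      (∏ j, ((b j : ℝ)) ^ (z j : ℕ)) =
        ∑ c : Σ k : Fin n, ∀ j : Fin m, Fin (β j - A j k + 1), y c *
          ((∏ j, (((c.2 j : ℕ) + A j c.1 : ℕ) : ℝ) ^ (z j : ℕ)) -
            ∏ j, ((c.2 j : ℕ) : ℝ) ^ (z j : ℕ)))
    (G : (∀ j : Fin m, Fin (β j + 1)) → ℝ) :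
    ∑ c : Σ k : Fin n, ∀ j : Fin m, Fin (β j - A j k + 1), y c *
      (G (fun j => ⟨(c.2 j : ℕ) + A j c.1, by
          have h1 := Fin.is_le (c.2 j); have h2 := hA c.1 j; omega⟩) -
       G (fun j => ⟨(c.2 j : ℕ), by
          have h1 := Fin.is_le (c.2 j); have h2 := hA c.1 j; omega⟩))
    = G (fun j => ⟨b j, by have := hb j; omega⟩) - G (fun j => ⟨0, by omega⟩) := by
  classical
  obtain ⟨Co, hCo⟩ := spanBox m β G
  set hd : (Σ k : Fin n, ∀ j : Fin m, Fin (β j - A j k + 1)) → (∀ j, Fin (β j + 1)) :=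
    fun c => fun j => ⟨(c.2 j : ℕ) + A j c.1, by
      have h1 := Fin.is_le (c.2 j); have h2 := hA c.1 j; omega⟩ with hhd
  set tl : (Σ k : Fin n, ∀ j : Fin m, Fin (β j - A j k + 1)) → (∀ j, Fin (β j + 1)) :=
    fun c => fun j => ⟨(c.2 j : ℕ), by
      have h1 := Fin.is_le (c.2 j); have h2 := hA c.1 j; omega⟩ with htl
  set bB : (∀ j, Fin (β j + 1)) := fun j => ⟨b j, by have := hb j; omega⟩ with hbB
  set zB : (∀ j, Fin (β j + 1)) := fun j => ⟨0, by omega⟩ with hzB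
  have key : ∀ z : (∀ j, Fin (β j + 1)),
      ∑ c, y c * ((∏ j, ((hd c j : ℕ) : ℝ) ^ (z j : ℕ)) - ∏ j, ((tl c j : ℕ) : ℝ) ^ (z j : ℕ))
      = (∏ j, ((bB j : ℕ) : ℝ) ^ (z j : ℕ)) - ∏ j, ((zB j : ℕ) : ℝ) ^ (z j : ℕ) := by
    intro z
    by_cases hz : 1 ≤ ∑ j, (z j : ℕ)
    · obtain ⟨j0, hj0⟩ : ∃ j0, 1 ≤ (z j0 : ℕ) := by
        by_contra h; push_neg at h
        have h0 : ∑ j, (z j : ℕ) = 0 := Finset.sum_eq_zero fun j _ => by have := h j; omega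
        omega
      have hzero : (∏ j, ((zB j : ℕ) : ℝ) ^ (z j : ℕ)) = 0 := by
        apply Finset.prod_eq_zero (Finset.mem_univ j0)
        show ((0:ℕ) : ℝ) ^ (z j0 : ℕ) = 0
        simp only [Nat.cast_zero]
        exact zero_pow (by omega)
      rw [hzero, sub_zero]
      rw [← hcon z hz]
    · have hs : ∑ j, (z j : ℕ) = 0 := by omega
      have h0 : ∀ j, (z j : ℕ) = 0 := fun j =>
        (Finset.sum_eq_zero_iff.mp hs) j (Finset.mem_univ j)
      simp only [h0, pow_zero, Finset.prod_const_one]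
      simp
  calc ∑ c, y c * (G (hd c) - G (tl c))
      = ∑ c, y c * ((∑ z, Co z * ∏ j, ((hd c j : ℕ) : ℝ) ^ (z j : ℕ))
          - ∑ z, Co z * ∏ j, ((tl c j : ℕ) : ℝ) ^ (z j : ℕ)) := by
        refine Finset.sum_congr rfl fun c _ => ?_
        rw [← hCo (hd c), ← hCo (tl c)]
    _ = ∑ c, ∑ z, Co z * (y c * ((∏ j, ((hd c j : ℕ) : ℝ) ^ (z j : ℕ))
          - ∏ j, ((tl c j : ℕ) : ℝ) ^ (z j : ℕ))) := by
        refine Finset.sum_congr rfl fun c _ => ?_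
        rw [← Finset.sum_sub_distrib, Finset.mul_sum]
        exact Finset.sum_congr rfl fun z _ => by ring
    _ = ∑ z, Co z * ∑ c, y c * ((∏ j, ((hd c j : ℕ) : ℝ) ^ (z j : ℕ))
          - ∏ j, ((tl c j : ℕ) : ℝ) ^ (z j : ℕ)) := by
        rw [Finset.sum_comm]
        exact Finset.sum_congr rfl fun z _ => by rw [Finset.mul_sum]
    _ = ∑ z, Co z * ((∏ j, ((bB j : ℕ) : ℝ) ^ (z j : ℕ))
          - ∏ j, ((zB j : ℕ) : ℝ) ^ (z j : ℕ)) := by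
        exact Finset.sum_congr rfl fun z _ => by rw [key z]
    _ = G bB - G zB := by
        rw [hCo bB, hCo zB, ← Finset.sum_sub_distrib]
        exact Finset.sum_congr rfl fun z _ => by ring

lemma dualBound (m n : ℕ) (A : Matrix (Fin m) (Fin n) ℕ) (β b : Fin m → ℕ)
    (hb : ∀ j, b j ≤ β j) (hA : ∀ k j, A j k ≤ β j) (hAne : ∀ k, ∃ j, A j k ≠ 0)
    (hfeas : ∃ x : Fin n → ℕ, ∀ j, ∑ k, A j k * x k = b j)
    (cst : Fin n → ℝ)
    (y : (Σ k : Fin n, ∀ j : Fin m, Fin (β j - A j k + 1)) → ℝ)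
    (hnn : ∀ c, 0 ≤ y c)
    (hcon : ∀ z : ∀ j : Fin m, Fin (β j + 1), 1 ≤ ∑ j, (z j : ℕ) →
      (∏ j, ((b j : ℝ)) ^ (z j : ℕ)) =
        ∑ c : Σ k : Fin n, ∀ j : Fin m, Fin (β j - A j k + 1), y c *
          ((∏ j, (((c.2 j : ℕ) + A j c.1 : ℕ) : ℝ) ^ (z j : ℕ)) -
            ∏ j, ((c.2 j : ℕ) : ℝ) ^ (z j : ℕ))) :
    ∃ x : Fin n → ℕ, (∀ j, ∑ k, A j k * x k = b j) ∧
      ∑ k, cst k * (x k : ℝ) ≤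
        ∑ k, cst k * ∑ u : ∀ j' : Fin m, Fin (β j' - A j' k + 1), y ⟨k, u⟩ := by
  classical
  set L := ∑ j, β j with hL
  have hAsum1 : ∀ k, 1 ≤ ∑ j, A j k := by
    intro k
    obtain ⟨j0, hj0⟩ := hAne k
    calc 1 ≤ A j0 k := Nat.one_le_iff_ne_zero.mpr hj0
      _ ≤ ∑ j, A j k := Finset.single_le_sum (f := fun j => A j k)
          (fun _ _ => Nat.zero_le _) (Finset.mem_univ j0)
  have hxbd : ∀ (x : Fin n → ℕ), (∀ j, ∑ k, A j k * x k ≤ b j) → ∀ k, x k ≤ L := by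
    intro x hx k
    calc x k = x k * 1 := (mul_one _).symm
      _ ≤ x k * ∑ j, A j k := Nat.mul_le_mul_left _ (hAsum1 k)
      _ = ∑ j, A j k * x k := by
            rw [Finset.mul_sum]
            exact Finset.sum_congr rfl fun j _ => mul_comm _ _
      _ ≤ ∑ j, b j := Finset.sum_le_sum fun j _ => le_trans
          (Finset.single_le_sum (f := fun k' => A j k' * x k')
            (fun _ _ => Nat.zero_le _) (Finset.mem_univ k)) (hx j)
      _ ≤ L := Finset.sum_le_sum fun j _ => hb j
  set S1 := ∑ k, |cst k| with hS1def
  have hS1 : ∀ k, |cst k| ≤ S1 := fun k => Finset.single_le_sum (f := fun k => |cst k|)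
    (fun _ _ => abs_nonneg _) (Finset.mem_univ k)
  have hS1nn : 0 ≤ S1 := Finset.sum_nonneg fun _ _ => abs_nonneg _
  set C : ℝ := S1 * L with hCdef
  set K : ℝ := S1 + 1 with hKdef
  set M : ℝ := C + K with hMdef
  set cond : (Fin m → ℕ) → (Fin n → Fin (L+1)) → Prop :=
    fun v x => ∀ j, v j + ∑ k, A j k * (x k : ℕ) = b j with hcond
  set Fv : (Fin m → ℕ) → Finset ℝ :=
    fun v => Finset.image (fun x : Fin n → Fin (L+1) => ∑ k, cst k * ((x k : ℕ) : ℝ))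
      (Finset.univ.filter (cond v)) with hFv
  have hFub : ∀ v : Fin m → ℕ, ∀ r ∈ Fv v, r ≤ C := by
    intro v r hr
    obtain ⟨x, -, rfl⟩ := Finset.mem_image.mp hr
    calc ∑ k, cst k * ((x k : ℕ) : ℝ) ≤ ∑ k, |cst k| * (L : ℝ) := by
          refine Finset.sum_le_sum fun k _ => ?_
          have h1 : cst k * ((x k : ℕ) : ℝ) ≤ |cst k| * ((x k : ℕ) : ℝ) :=
            mul_le_mul_of_nonneg_right (le_abs_self _) (Nat.cast_nonneg _)
          have h2 : |cst k| * ((x k : ℕ) : ℝ) ≤ |cst k| * (L : ℝ) :=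
            mul_le_mul_of_nonneg_left (Nat.cast_le.mpr (Fin.is_le _)) (abs_nonneg _)
          linarith
      _ = C := by rw [hCdef, ← Finset.sum_mul]
  set V : (Fin m → ℕ) → ℝ :=
    fun v => if h : (Fv v).Nonempty then (Fv v).min' h else M + K * ((∑ j, v j : ℕ) : ℝ)
    with hV
  -- V b ≤ 0
  have hmem0 : (0 : ℝ) ∈ Fv b := by
    refine Finset.mem_image.mpr ⟨fun _ => ⟨0, by omega⟩, ?_, by simp⟩
    refine Finset.mem_filter.mpr ⟨Finset.mem_univ _, fun j => by simp⟩
  have hVb : V b ≤ 0 := by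
    simp only [hV]
    rw [dif_pos ⟨0, hmem0⟩]
    exact Finset.min'_le _ _ hmem0
  -- lifting along an edge
  have hlift : ∀ (k : Fin n) (v : Fin m → ℕ), (∀ j, v j + A j k ≤ β j) →
      ∀ r ∈ Fv (fun j => v j + A j k), cst k + r ∈ Fv v := by
    intro k v _ r hr
    obtain ⟨xh, hxh, rfl⟩ := Finset.mem_image.mp hr
    have hcondh := (Finset.mem_filter.mp hxh).2
    set x' : Fin n → ℕ := fun k' => (xh k' : ℕ) + if k' = k then 1 else 0 with hx'
    have hcond' : ∀ j, v j + ∑ k', A j k' * x' k' = b j := by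
      intro j
      have e1 : ∑ k', A j k' * x' k' = (∑ k', A j k' * (xh k' : ℕ)) + A j k := by
        rw [show (fun k' => A j k' * x' k') = fun k' =>
            A j k' * (xh k' : ℕ) + (if k' = k then A j k' else 0) by
          funext k'; by_cases h : k' = k <;> simp [hx', h] <;> ring]
        rw [Finset.sum_add_distrib, Finset.sum_ite_eq' Finset.univ k (fun k' => A j k')]
        simp
      have e2 := hcondh j
      dsimp only at e2
      omega
    have hbd : ∀ k', x' k' ≤ L := hxbd x' (fun j => by have := hcond' j; omega)
    refine Finset.mem_image.mpr ⟨fun k' => ⟨x' k', by have := hbd k'; omega⟩, ?_, ?_⟩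
    · exact Finset.mem_filter.mpr ⟨Finset.mem_univ _, fun j => hcond' j⟩
    · show ∑ k', cst k' * ((x' k' : ℕ) : ℝ) = cst k + ∑ k', cst k' * ((xh k' : ℕ) : ℝ)
      rw [show (fun k' => cst k' * ((x' k' : ℕ) : ℝ)) = fun k' =>
          cst k' * ((xh k' : ℕ) : ℝ) + (if k' = k then cst k' else 0) by
        funext k'; by_cases h : k' = k <;> simp [hx', h] <;> push_cast <;> ring]
      rw [Finset.sum_add_distrib, Finset.sum_ite_eq' Finset.univ k cst]
      simp [add_comm]
  -- edge inequality
  have hedge : ∀ (k : Fin n) (v : Fin m → ℕ), (∀ j, v j + A j k ≤ β j) →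
      V v ≤ cst k + V (fun j => v j + A j k) := by
    intro k v hvle
    by_cases hw : (Fv (fun j => v j + A j k)).Nonempty
    · have hmem := hlift k v hvle _ (Finset.min'_mem _ hw)
      have hv : (Fv v).Nonempty := ⟨_, hmem⟩
      simp only [hV]
      rw [dif_pos hv, dif_pos hw]
      exact Finset.min'_le _ _ hmem
    · have hKnn : (0:ℝ) ≤ K := by rw [hKdef]; linarith
      have hcst : -S1 ≤ cst k := neg_le_of_abs_le (hS1 k)
      by_cases hv : (Fv v).Nonempty
      · simp only [hV]
        rw [dif_pos hv, dif_neg hw]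
        have h1 : (Fv v).min' hv ≤ C := hFub v _ (Finset.min'_mem _ hv)
        have h2 : (0:ℝ) ≤ K * ((∑ j, (v j + A j k) : ℕ) : ℝ) :=
          mul_nonneg hKnn (Nat.cast_nonneg _)
        rw [hMdef, hKdef] at *
        linarith
      · simp only [hV]
        rw [dif_neg hv, dif_neg hw]
        have hsums : ((∑ j, (v j + A j k) : ℕ) : ℝ)
            = ((∑ j, v j : ℕ) : ℝ) + ((∑ j, A j k : ℕ) : ℝ) := by
          rw [Finset.sum_add_distrib]; push_cast; ring
        have h1 : (1:ℝ) ≤ ((∑ j, A j k : ℕ) : ℝ) := by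
          exact_mod_cast Nat.one_le_cast.mpr (hAsum1 k)
        have h2 : K * 1 ≤ K * ((∑ j, A j k : ℕ) : ℝ) := mul_le_mul_of_nonneg_left h1 hKnn
        rw [hsums, hKdef]
        rw [hKdef] at h2
        nlinarith
  -- V 0 is attained by a feasible integer point
  obtain ⟨x0, hx0⟩ := hfeas
  have hx0bd : ∀ k, x0 k ≤ L := hxbd x0 (fun j => le_of_eq (hx0 j))
  have hFv0ne : (Fv (fun _ => 0)).Nonempty := by
    refine ⟨_, Finset.mem_image.mpr ⟨fun k => ⟨x0 k, by have := hx0bd k; omega⟩, ?_, rfl⟩⟩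
    exact Finset.mem_filter.mpr ⟨Finset.mem_univ _, fun j => by simpa using hx0 j⟩
  obtain ⟨xm, hxmf, hxmc⟩ := Finset.mem_image.mp (Finset.min'_mem _ hFv0ne)
  have hxmfeas : ∀ j, ∑ k, A j k * (xm k : ℕ) = b j := by
    intro j
    have := (Finset.mem_filter.mp hxmf).2 j
    dsimp only at this
    omega
  have hV0 : V (fun _ => 0) = ∑ k, cst k * ((xm k : ℕ) : ℝ) := by
    simp only [hV]
    rw [dif_pos hFv0ne, ← hxmc]
  -- apply the main identity with G = V
  have hid := mainIdentity m n A β b hb hA y hcon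
    (fun v => V (fun j => (v j : ℕ)))
  have hterm : ∀ c : Σ k : Fin n, ∀ j : Fin m, Fin (β j - A j k + 1),
      y c * (-cst c.1) ≤ y c *
        (V (fun j => (c.2 j : ℕ) + A j c.1) - V (fun j => (c.2 j : ℕ))) := by
    intro c
    refine mul_le_mul_of_nonneg_left ?_ (hnn c)
    have := hedge c.1 (fun j => (c.2 j : ℕ)) (fun j => by
      have h1 := Fin.is_le (c.2 j); have h2 := hA c.1 j; omega)
    linarith
  have hsum : ∑ c : Σ k : Fin n, ∀ j : Fin m, Fin (β j - A j k + 1),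
      y c * (V (fun j => (c.2 j : ℕ) + A j c.1) - V (fun j => (c.2 j : ℕ)))
      = V b - V (fun _ => 0) := hid
  have hfinal : V (fun _ => 0) - V b ≤
      ∑ c : Σ k : Fin n, ∀ j : Fin m, Fin (β j - A j k + 1), y c * cst c.1 := by
    have h := Finset.sum_le_sum (fun c (_ : c ∈ Finset.univ) => hterm c)
    rw [hsum] at h
    have : ∑ c : Σ k : Fin n, ∀ j : Fin m, Fin (β j - A j k + 1), y c * (-cst c.1)
        = -∑ c : Σ k : Fin n, ∀ j : Fin m, Fin (β j - A j k + 1), y c * cst c.1 := by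
      rw [← Finset.sum_neg_distrib]
      exact Finset.sum_congr rfl fun c _ => by ring
    rw [this] at h
    linarith
  refine ⟨fun k => (xm k : ℕ), hxmfeas, ?_⟩
  have hrsig : ∑ k, cst k * ∑ u : ∀ j' : Fin m, Fin (β j' - A j' k + 1), y ⟨k, u⟩
      = ∑ c : Σ k : Fin n, ∀ j : Fin m, Fin (β j - A j k + 1), y c * cst c.1 := by
    rw [← Finset.univ_sigma_univ, Finset.sum_sigma]
    exact Finset.sum_congr rfl fun k _ => by
      rw [Finset.mul_sum]; exact Finset.sum_congr rfl fun u _ => by ring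
  rw [hrsig]
  rw [← hV0]
  linarith



/-- The hierarchy of LP relaxations: `J_1 ≤ J_2 ≤ … ≤ J_{|β|}` and `J_{|β|} = J_•`. -/
theorem stmt_13 (m n : ℕ) (hm : 0 < m) (hn : 0 < n)
    (A : Matrix (Fin m) (Fin n) ℕ) (β b : Fin m → ℕ)
    (hb : ∀ j, b j ≤ β j) (hA : ∀ k j, A j k ≤ β j)
    (hAne : ∀ k, ∃ j, A j k ≠ 0)
    (hfeas : ∃ x : Fin n → ℕ, ∀ j, ∑ k, A j k * x k = b j)
    (cst : Fin n → ℝ)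
    (J : ℕ → ℝ)
    (hJ : ∀ ℓ : ℕ, J ℓ = sInf {r : ℝ |
      ∃ y : (Σ k : Fin n, ∀ j : Fin m, Fin (β j - A j k + 1)) → ℝ,
        (∀ c, 0 ≤ y c) ∧
        (∀ z : ∀ j : Fin m, Fin (β j + 1),
          1 ≤ ∑ j, (z j : ℕ) → (∑ j, (z j : ℕ)) ≤ ℓ →
          (∏ j, ((b j : ℝ)) ^ (z j : ℕ)) =
            ∑ c : Σ k : Fin n, ∀ j : Fin m, Fin (β j - A j k + 1), y c *
              ((∏ j, (((c.2 j : ℕ) + A j c.1 : ℕ) : ℝ) ^ (z j : ℕ)) -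
                ∏ j, ((c.2 j : ℕ) : ℝ) ^ (z j : ℕ))) ∧
        r = ∑ k, cst k * ∑ u : ∀ j' : Fin m, Fin (β j' - A j' k + 1), y ⟨k, u⟩})
    (Jdot : ℝ)
    (hJdot : Jdot = sInf {r : ℝ |
      ∃ x : Fin n → ℕ, (∀ j, ∑ k, A j k * x k = b j) ∧ r = ∑ k, cst k * (x k : ℝ)}) :
    (∀ ℓ ℓ' : ℕ, 1 ≤ ℓ → ℓ ≤ ℓ' → ℓ' ≤ ∑ j, β j → J ℓ ≤ J ℓ') ∧
    J (∑ j, β j) = Jdot := by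
  classical
  obtain ⟨x₀, hx₀⟩ := hfeas
  set L := ∑ j, β j with hLdef
  have hAsum1 : ∀ k, 1 ≤ ∑ j, A j k := by
    intro k
    obtain ⟨j0, hj0⟩ := hAne k
    calc 1 ≤ A j0 k := Nat.one_le_iff_ne_zero.mpr hj0
      _ ≤ ∑ j, A j k := Finset.single_le_sum (f := fun j => A j k)
          (fun _ _ => Nat.zero_le _) (Finset.mem_univ j0)
  have hL1 : 1 ≤ L := by
    obtain ⟨j0, hj0⟩ := hAne ⟨0, hn⟩
    have h1 : 1 ≤ β j0 := le_trans (Nat.one_le_iff_ne_zero.mpr hj0) (hA _ j0)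
    calc 1 ≤ β j0 := h1
      _ ≤ L := Finset.single_le_sum (f := fun j => β j)
          (fun _ _ => Nat.zero_le _) (Finset.mem_univ j0)
  set S1 := ∑ k, |cst k| with hS1def
  have hS1 : ∀ k, |cst k| ≤ S1 := fun k => Finset.single_le_sum (f := fun k => |cst k|)
    (fun _ _ => abs_nonneg _) (Finset.mem_univ k)
  have hS1nn : 0 ≤ S1 := Finset.sum_nonneg fun _ _ => abs_nonneg _
  -- membership of integer points at every level
  have hmem : ∀ (ℓ : ℕ) (x : Fin n → ℕ), (∀ j, ∑ k, A j k * x k = b j) →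
      (∑ k, cst k * (x k : ℝ)) ∈ {r : ℝ |
      ∃ y : (Σ k : Fin n, ∀ j : Fin m, Fin (β j - A j k + 1)) → ℝ,
        (∀ c, 0 ≤ y c) ∧
        (∀ z : ∀ j : Fin m, Fin (β j + 1),
          1 ≤ ∑ j, (z j : ℕ) → (∑ j, (z j : ℕ)) ≤ ℓ →
          (∏ j, ((b j : ℝ)) ^ (z j : ℕ)) =
            ∑ c : Σ k : Fin n, ∀ j : Fin m, Fin (β j - A j k + 1), y c *
              ((∏ j, (((c.2 j : ℕ) + A j c.1 : ℕ) : ℝ) ^ (z j : ℕ)) -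
                ∏ j, ((c.2 j : ℕ) : ℝ) ^ (z j : ℕ))) ∧
        r = ∑ k, cst k * ∑ u : ∀ j' : Fin m, Fin (β j' - A j' k + 1), y ⟨k, u⟩} := by
    intro ℓ x hx
    obtain ⟨y, h1, h2, h3⟩ := pathCons m n A β (∑ k, x k) x b rfl hx hb
    exact ⟨y, h1, fun z hz _ => h2 z hz,
      (Finset.sum_congr rfl fun k _ => by rw [h3 k]).symm⟩
  -- lower bound on feasible values at any level ℓ ≥ 1
  have hlb : ∀ (ℓ : ℕ), 1 ≤ ℓ → ∀ r ∈ {r : ℝ |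
      ∃ y : (Σ k : Fin n, ∀ j : Fin m, Fin (β j - A j k + 1)) → ℝ,
        (∀ c, 0 ≤ y c) ∧
        (∀ z : ∀ j : Fin m, Fin (β j + 1),
          1 ≤ ∑ j, (z j : ℕ) → (∑ j, (z j : ℕ)) ≤ ℓ →
          (∏ j, ((b j : ℝ)) ^ (z j : ℕ)) =
            ∑ c : Σ k : Fin n, ∀ j : Fin m, Fin (β j - A j k + 1), y c *
              ((∏ j, (((c.2 j : ℕ) + A j c.1 : ℕ) : ℝ) ^ (z j : ℕ)) -
                ∏ j, ((c.2 j : ℕ) : ℝ) ^ (z j : ℕ))) ∧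
        r = ∑ k, cst k * ∑ u : ∀ j' : Fin m, Fin (β j' - A j' k + 1), y ⟨k, u⟩},
      -(S1 * (L : ℝ)) ≤ r := by
    intro ℓ hℓ r hr
    obtain ⟨y, hnn, hcon, hr⟩ := hr
    have hbj : ∀ j, (b j : ℝ) = ∑ c : Σ k : Fin n, ∀ j : Fin m, Fin (β j - A j k + 1),
        y c * (A j c.1 : ℝ) := by
      intro j
      by_cases hβ : 1 ≤ β j
      · set z : ∀ j', Fin (β j' + 1) :=
          fun j' => if h : j' = j then ⟨min 1 (β j'), by omega⟩ else ⟨0, by omega⟩ with hzd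
        have hzval : ∀ j', (z j' : ℕ) = if j' = j then min 1 (β j') else 0 := by
          intro j'; by_cases h : j' = j <;> simp [hzd, h]
        have hzj : (z j : ℕ) = 1 := by rw [hzval, if_pos rfl]; omega
        have hsum1 : ∑ j', (z j' : ℕ) = 1 := by
          calc ∑ j', (z j' : ℕ) = ∑ j', (if j' = j then min 1 (β j') else 0) :=
                Finset.sum_congr rfl fun j' _ => hzval j'
            _ = min 1 (β j) := by rw [Finset.sum_ite_eq' Finset.univ j]; simp
            _ = 1 := by omega
        have hcz := hcon z (by omega) (by rw [hsum1]; exact hℓ)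
        have hprod : ∀ (w : Fin m → ℕ), (∏ j', ((w j' : ℝ)) ^ (z j' : ℕ)) = (w j : ℝ) := by
          intro w
          rw [Finset.prod_eq_single j]
          · rw [hzj, pow_one]
          · intro j' _ hne
            rw [show (z j' : ℕ) = 0 from by rw [hzval j', if_neg hne], pow_zero]
          · intro h; exact absurd (Finset.mem_univ j) h
        simp only [hprod] at hcz
        rw [hcz]
        exact Finset.sum_congr rfl fun c _ => by push_cast; ring
      · have hb0 : b j = 0 := by have := hb j; omega
        have hA0 : ∀ k, A j k = 0 := fun k => by have := hA k j; omega
        simp [hb0, hA0]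
    have h1 : ∑ j, (b j : ℝ) = ∑ c : Σ k : Fin n, ∀ j : Fin m, Fin (β j - A j k + 1),
        y c * (∑ j, (A j c.1 : ℝ)) := by
      calc ∑ j, (b j : ℝ)
          = ∑ j, ∑ c : Σ k : Fin n, ∀ j : Fin m, Fin (β j - A j k + 1), y c * (A j c.1 : ℝ) :=
            Finset.sum_congr rfl fun j _ => hbj j
        _ = ∑ c : Σ k : Fin n, ∀ j : Fin m, Fin (β j - A j k + 1), ∑ j, y c * (A j c.1 : ℝ) :=
            Finset.sum_comm
        _ = _ := Finset.sum_congr rfl fun c _ => (Finset.mul_sum _ _ _).symm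
    have h2 : ∑ c : Σ k : Fin n, ∀ j : Fin m, Fin (β j - A j k + 1), y c * 1
        ≤ ∑ c : Σ k : Fin n, ∀ j : Fin m, Fin (β j - A j k + 1), y c * (∑ j, (A j c.1 : ℝ)) := by
      refine Finset.sum_le_sum fun c _ => mul_le_mul_of_nonneg_left ?_ (hnn c)
      have := hAsum1 c.1
      calc (1:ℝ) = ((1:ℕ):ℝ) := by norm_num
        _ ≤ ((∑ j, A j c.1 : ℕ) : ℝ) := Nat.cast_le.mpr this
        _ = ∑ j, (A j c.1 : ℝ) := by push_cast; rfl
    have h3 : ∑ j, (b j : ℝ) ≤ (L : ℝ) := by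
      have : (∑ j, b j) ≤ L := Finset.sum_le_sum fun j _ => hb j
      calc ∑ j, (b j : ℝ) = ((∑ j, b j : ℕ) : ℝ) := by push_cast; rfl
        _ ≤ (L : ℝ) := Nat.cast_le.mpr this
    have hsumy : ∑ c : Σ k : Fin n, ∀ j : Fin m, Fin (β j - A j k + 1), y c ≤ (L : ℝ) := by
      have h4 : ∑ c : Σ k : Fin n, ∀ j : Fin m, Fin (β j - A j k + 1), y c
          = ∑ c : Σ k : Fin n, ∀ j : Fin m, Fin (β j - A j k + 1), y c * 1 := by
        exact Finset.sum_congr rfl fun c _ => (mul_one _).symm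
      rw [h4]; linarith
    have hynn : (0:ℝ) ≤ ∑ c : Σ k : Fin n, ∀ j : Fin m, Fin (β j - A j k + 1), y c :=
      Finset.sum_nonneg fun c _ => hnn c
    have hrsig : r = ∑ c : Σ k : Fin n, ∀ j : Fin m, Fin (β j - A j k + 1), cst c.1 * y c := by
      rw [hr, ← Finset.univ_sigma_univ, Finset.sum_sigma]
      exact Finset.sum_congr rfl fun k _ => by rw [Finset.mul_sum]
    have h5 : ∑ c : Σ k : Fin n, ∀ j : Fin m, Fin (β j - A j k + 1), (-S1) * y c
        ≤ ∑ c : Σ k : Fin n, ∀ j : Fin m, Fin (β j - A j k + 1), cst c.1 * y c := by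
      refine Finset.sum_le_sum fun c _ => mul_le_mul_of_nonneg_right ?_ (hnn c)
      have := hS1 c.1
      have := neg_abs_le (cst c.1)
      linarith
    have h6 : ∑ c : Σ k : Fin n, ∀ j : Fin m, Fin (β j - A j k + 1), (-S1) * y c
        = -S1 * ∑ c : Σ k : Fin n, ∀ j : Fin m, Fin (β j - A j k + 1), y c := by
      rw [Finset.mul_sum]
    have h7 : S1 * ∑ c : Σ k : Fin n, ∀ j : Fin m, Fin (β j - A j k + 1), y c ≤ S1 * (L:ℝ) :=
      mul_le_mul_of_nonneg_left hsumy hS1nn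
    rw [hrsig]
    rw [h6] at h5
    nlinarith
  have hbdd : ∀ ℓ : ℕ, 1 ≤ ℓ → BddBelow {r : ℝ |
      ∃ y : (Σ k : Fin n, ∀ j : Fin m, Fin (β j - A j k + 1)) → ℝ,
        (∀ c, 0 ≤ y c) ∧
        (∀ z : ∀ j : Fin m, Fin (β j + 1),
          1 ≤ ∑ j, (z j : ℕ) → (∑ j, (z j : ℕ)) ≤ ℓ →
          (∏ j, ((b j : ℝ)) ^ (z j : ℕ)) =
            ∑ c : Σ k : Fin n, ∀ j : Fin m, Fin (β j - A j k + 1), y c *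
              ((∏ j, (((c.2 j : ℕ) + A j c.1 : ℕ) : ℝ) ^ (z j : ℕ)) -
                ∏ j, ((c.2 j : ℕ) : ℝ) ^ (z j : ℕ))) ∧
        r = ∑ k, cst k * ∑ u : ∀ j' : Fin m, Fin (β j' - A j' k + 1), y ⟨k, u⟩} :=
    fun ℓ hℓ => ⟨-(S1 * (L : ℝ)), fun r hr => hlb ℓ hℓ r hr⟩
  constructor
  · intro ℓ ℓ' h1 h2 _
    rw [hJ ℓ, hJ ℓ']
    refine csInf_le_csInf (hbdd ℓ h1) ⟨_, hmem ℓ' x₀ hx₀⟩ ?_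
    rintro r ⟨y, hnn, hcon, hr⟩
    exact ⟨y, hnn, fun z hz1 hz2 => hcon z hz1 (le_trans hz2 h2), hr⟩
  · rw [hJ L, hJdot]
    have hTne : Set.Nonempty {r : ℝ |
        ∃ x : Fin n → ℕ, (∀ j, ∑ k, A j k * x k = b j) ∧ r = ∑ k, cst k * (x k : ℝ)} :=
      ⟨_, ⟨x₀, hx₀, rfl⟩⟩
    have hTbdd : BddBelow {r : ℝ |
        ∃ x : Fin n → ℕ, (∀ j, ∑ k, A j k * x k = b j) ∧ r = ∑ k, cst k * (x k : ℝ)} := by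
      refine ⟨-(S1 * (L : ℝ)), ?_⟩
      rintro r ⟨x, hx, rfl⟩
      exact hlb L hL1 _ (hmem L x hx)
    apply le_antisymm
    · refine le_csInf hTne ?_
      rintro r ⟨x, hx, rfl⟩
      exact csInf_le (hbdd L hL1) (hmem L x hx)
    · refine le_csInf ⟨_, hmem L x₀ hx₀⟩ ?_
      rintro r ⟨y, hnn, hcon, hr⟩
      have hconfull : ∀ z : ∀ j : Fin m, Fin (β j + 1), 1 ≤ ∑ j, (z j : ℕ) →
          (∏ j, ((b j : ℝ)) ^ (z j : ℕ)) =
            ∑ c : Σ k : Fin n, ∀ j : Fin m, Fin (β j - A j k + 1), y c *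
              ((∏ j, (((c.2 j : ℕ) + A j c.1 : ℕ) : ℝ) ^ (z j : ℕ)) -
                ∏ j, ((c.2 j : ℕ) : ℝ) ^ (z j : ℕ)) := by
        intro z hz
        exact hcon z hz (Finset.sum_le_sum fun j _ => Fin.is_le _)
      obtain ⟨x, hxf, hle⟩ := dualBound m n A β b hb hA hAne ⟨x₀, hx₀⟩ cst y hnn hconfull
      calc sInf {r : ℝ | ∃ x : Fin n → ℕ, (∀ j, ∑ k, A j k * x k = b j)
              ∧ r = ∑ k, cst k * (x k : ℝ)}
          ≤ ∑ k, cst k * (x k : ℝ) := csInf_le hTbdd ⟨x, hxf, rfl⟩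
        _ ≤ ∑ k, cst k * ∑ u : ∀ j' : Fin m, Fin (β j' - A j' k + 1), y ⟨k, u⟩ := hle
        _ = r := hr.symm
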